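/- arXiv:0804.0526 — 2 statements merged into one kernel-verified Lean document; each statement's English description precedes it below -/
import Mathlib

section
/- Let X = ℤ∖{0}. The partial translation operator s₁ on ℓ²(X) satisfies s₁s₁* = 1 − p₁, where p₁ is the rank-one orthogonal projection onto the span of δ₁, and the C*-subalgebra of B(ℓ²(X)) generated by the family {sₙ : n ∈ ℤ} contains every compact operator on ℓ²(X). -/
/- ℓ²(X) for X = ℤ∖{0}, with its standard orthonormal basis (δₓ)_{x∈X}. -/
noncomputable section

abbrev Xzd : Set ℤ := {x : ℤ | x ≠ 0}

abbrev l2X : Type := lp (fun _ : Xzd => ℂ) 2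

/-- The standard basis vector δₓ of ℓ²(X). -/
def δ (x : Xzd) : l2X := lp.single 2 x 1

open scoped InnerProductSpace ComplexConjugate
open ContinuousLinearMap

lemma delta_apply (x y : Xzd) : (δ x) y = if y = x then 1 else 0 := by
  classical
  simp [δ, lp.single_apply, Pi.single_apply]

lemma inner_delta (x : Xzd) (f : l2X) : ⟪δ x, f⟫_ℂ = f x := by
  classical
  rw [δ, lp.inner_single_left]
  simp

lemma vec_ext {u v : l2X} (h : ∀ y, ⟪δ y, u⟫_ℂ = ⟪δ y, v⟫_ℂ) : u = v := by
  apply lp.ext; funext y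
  simpa [inner_delta] using h y

lemma dense_span_delta : Dense (Submodule.span ℂ (Set.range δ) : Set l2X) := by
  intro f
  refine mem_closure_of_tendsto (lp.hasSum_single (by norm_num) f) (Filter.Eventually.of_forall ?_)
  intro F
  refine Submodule.sum_mem _ fun i _ => ?_
  have : lp.single (E := fun _ : Xzd => ℂ) 2 i (f i) = f i • δ i := by
    rw [δ, ← lp.single_smul]; norm_num
  rw [this]
  exact Submodule.smul_mem _ _ (Submodule.subset_span ⟨i, rfl⟩)

lemma ext_delta {T U : l2X →L[ℂ] l2X} (h : ∀ x, T (δ x) = U (δ x)) : T = U := by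
  apply ContinuousLinearMap.ext_on dense_span_delta
  rintro _ ⟨x, rfl⟩; exact h x

def e (x y : Xzd) : l2X →L[ℂ] l2X := (innerSL ℂ (δ y)).smulRight (δ x)

lemma e_apply (x y : Xzd) (f : l2X) : e x y f = ⟪δ y, f⟫_ℂ • δ x := rfl

lemma inner_delta_delta (x y : Xzd) : ⟪δ x, δ y⟫_ℂ = if y = x then 1 else 0 := by
  rw [inner_delta, delta_apply]
  exact if_congr ⟨Eq.symm, Eq.symm⟩ rfl rfl

lemma e_delta (x y z : Xzd) : e x y (δ z) = if z = y then δ x else 0 := by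
  rw [e_apply, inner_delta_delta]
  split_ifs <;> simp

lemma inner_e (x y : Xzd) (u w : l2X) : ⟪e x y u, w⟫_ℂ = ⟪u, e y x w⟫_ℂ := by
  rw [e_apply, e_apply, inner_smul_left, inner_smul_right, inner_delta, inner_delta,
    ← inner_conj_symm u (δ y), inner_delta]
  ring

lemma adjoint_e (x y : Xzd) : adjoint (e x y) = e y x := by
  symm; rw [eq_adjoint_iff]; exact inner_e y x

def P (F : Finset Xzd) : l2X →L[ℂ] l2X := ∑ x ∈ F, e x x

lemma adjoint_P (F : Finset Xzd) : adjoint (P F) = P F := by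
  symm; rw [eq_adjoint_iff]
  intro u w
  simp only [P, ContinuousLinearMap.sum_apply, sum_inner, inner_sum]
  exact Finset.sum_congr rfl fun x _ => inner_e x x u w

lemma P_apply (F : Finset Xzd) (f : l2X) : P F f = ∑ x ∈ F, f x • δ x := by
  classical
  simp [P, ContinuousLinearMap.sum_apply, e_apply, inner_delta]

lemma P_delta (F : Finset Xzd) (z : Xzd) : P F (δ z) = if z ∈ F then δ z else 0 := by
  classical
  simp only [P, ContinuousLinearMap.sum_apply, e_delta]
  simp

lemma inner_P_left (F : Finset Xzd) (f g : l2X) :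
    ⟪P F f, g⟫_ℂ = ∑ x ∈ F, conj (f x) * g x := by
  rw [P_apply, sum_inner]
  refine Finset.sum_congr rfl fun x _ => ?_
  rw [inner_smul_left, inner_delta]

lemma P_coord (F : Finset Xzd) (f : l2X) (x : Xzd) (hx : x ∈ F) : (P F f) x = f x := by
  classical
  rw [← inner_delta, ← inner_delta x f, ← adjoint_P F, adjoint_inner_right]
  rw [P_delta, if_pos hx]

lemma inner_P_orth (F : Finset Xzd) (f : l2X) : ⟪P F f, f - P F f⟫_ℂ = 0 := by
  rw [inner_sub_right, inner_P_left, inner_P_left, sub_eq_zero]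
  refine Finset.sum_congr rfl fun x hx => ?_
  rw [P_coord F f x hx]

lemma pythagoras (F : Finset Xzd) (f : l2X) :
    ‖P F f‖ ^ 2 + ‖f - P F f‖ ^ 2 = ‖f‖ ^ 2 := by
  have h := norm_add_sq (𝕜 := ℂ) (P F f) (f - P F f)
  rw [inner_P_orth] at h
  simp only [map_zero, mul_zero, add_zero, zero_mul] at h
  rw [add_sub_cancel] at h
  linarith [h]

lemma norm_P_le (F : Finset Xzd) (f : l2X) : ‖P F f‖ ≤ ‖f‖ := by
  have h := pythagoras F f
  nlinarith [norm_nonneg (P F f), norm_nonneg f, norm_nonneg (f - P F f)]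

lemma norm_sub_P_le (F : Finset Xzd) (f : l2X) : ‖f - P F f‖ ≤ ‖f‖ := by
  have h := pythagoras F f
  nlinarith [norm_nonneg (P F f), norm_nonneg f, norm_nonneg (f - P F f)]

lemma tail (f : l2X) {ε : ℝ} (hε : 0 < ε) :
    ∃ F₀ : Finset Xzd, ∀ F : Finset Xzd, F₀ ⊆ F → ‖f - P F f‖ < ε := by
  classical
  have h : HasSum (fun i => lp.single (E := fun _ : Xzd => ℂ) 2 i (f i)) f :=
    lp.hasSum_single (by norm_num) f
  have h2 := Metric.tendsto_nhds.mp h ε hε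
  rw [SummationFilter.unconditional_filter, Filter.eventually_atTop] at h2
  obtain ⟨F₀, hF₀⟩ := h2
  refine ⟨F₀, fun F hF => ?_⟩
  have := hF₀ F hF
  rw [dist_eq_norm] at this
  have hPF : P F f = ∑ i ∈ F, lp.single (E := fun _ : Xzd => ℂ) 2 i (f i) := by
    rw [P_apply]
    refine Finset.sum_congr rfl fun i _ => ?_
    rw [δ, ← lp.single_smul]; norm_num
  rw [hPF, ← norm_neg]
  simpa [neg_sub] using this

lemma idd (a b : Xzd) : ⟪δ a, δ b⟫_ℂ = if (b : ℤ) = (a : ℤ) then 1 else 0 := by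
  rw [inner_delta, delta_apply]
  simp [Subtype.ext_iff]
  exact if_congr ⟨Eq.symm, Eq.symm⟩ rfl rfl

section S
variable (s : ℤ → (l2X →L[ℂ] l2X))
variable (hs : ∀ (n : ℤ) (x : Xzd),
      (∀ h : (x : ℤ) + n ∈ Xzd, s n (δ x) = δ ⟨(x : ℤ) + n, h⟩) ∧
      ((x : ℤ) + n ∉ Xzd → s n (δ x) = 0))
include hs

lemma s_delta (n : ℤ) (x : Xzd) (h : (x : ℤ) + n ≠ 0) :
    s n (δ x) = δ ⟨(x : ℤ) + n, h⟩ := (hs n x).1 h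

lemma s_delta0 (n : ℤ) (x : Xzd) (h : (x : ℤ) + n = 0) : s n (δ x) = 0 :=
  (hs n x).2 (by simpa [Xzd] using h)

lemma adjoint_s1 : adjoint (s 1) = s (-1) := by
  apply ext_delta; intro x; apply vec_ext; intro y
  rw [adjoint_inner_right]
  have hx : (x : ℤ) ≠ 0 := x.2
  have hy : (y : ℤ) ≠ 0 := y.2
  by_cases h1 : (y : ℤ) + 1 = 0
  · rw [s_delta0 s hs 1 y h1, inner_zero_left]
    by_cases h2 : (x : ℤ) + (-1) = 0
    · rw [s_delta0 s hs (-1) x h2, inner_zero_right]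
    · rw [s_delta s hs (-1) x h2, idd]
      rw [if_neg (by dsimp only; omega)]
  · rw [s_delta s hs 1 y h1]
    by_cases h2 : (x : ℤ) + (-1) = 0
    · rw [s_delta0 s hs (-1) x h2, inner_zero_right, idd, if_neg (by dsimp only; omega)]
    · rw [s_delta s hs (-1) x h2, idd, idd]
      by_cases h3 : (x : ℤ) = (y : ℤ) + 1
      · rw [if_pos (by dsimp only; omega), if_pos (by dsimp only; omega)]
      · rw [if_neg (by dsimp only; omega), if_neg (by dsimp only; omega)]

lemma part1 : s 1 * adjoint (s 1) = 1 - e ⟨1, one_ne_zero⟩ ⟨1, one_ne_zero⟩ := by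
  rw [adjoint_s1 s hs]
  apply ext_delta; intro x
  have hx : (x : ℤ) ≠ 0 := x.2
  rw [mul_apply_eq_comp, sub_apply, one_apply_eq_self, e_apply, idd]
  by_cases h : (x : ℤ) + (-1) = 0
  · rw [s_delta0 s hs _ _ h, map_zero, if_pos (by dsimp only; omega)]
    have : x = ⟨1, one_ne_zero⟩ := Subtype.ext (by dsimp only; omega)
    rw [this, one_smul, sub_self]
  · rw [s_delta s hs _ _ h, s_delta s hs 1 _ (by simp; omega), if_neg (by dsimp only; omega)]
    rw [zero_smul, sub_zero]
    congr 1
    exact Subtype.ext (by simp)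

lemma e_eq (x y : Xzd) :
    e x y = s ((x : ℤ) - 1) * ((1 : l2X →L[ℂ] l2X) - s 1 * s (-1)) * s (1 - (y : ℤ)) := by
  have hx : (x : ℤ) ≠ 0 := x.2
  have hy : (y : ℤ) ≠ 0 := y.2
  apply ext_delta; intro z
  have hz : (z : ℤ) ≠ 0 := z.2
  rw [mul_apply_eq_comp, mul_apply_eq_comp, e_delta]
  by_cases h1 : (z : ℤ) + (1 - (y : ℤ)) = 0
  · rw [s_delta0 s hs _ _ h1, map_zero, map_zero, if_neg (by intro hzy; rw [hzy] at h1; omega)]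
  · rw [s_delta s hs _ _ h1, sub_apply, one_apply_eq_self, mul_apply_eq_comp]
    by_cases h2 : (z : ℤ) = (y : ℤ)
    · rw [s_delta0 s hs (-1) _ (by simp; omega), map_zero, sub_zero,
        s_delta s hs _ _ (by simp; omega), if_pos (Subtype.ext h2)]
      congr 1
      exact Subtype.ext (by simp; omega)
    · rw [s_delta s hs (-1) _ (by simp; omega), s_delta s hs 1 _ (by simp; omega)]
      rw [if_neg (fun hzy => h2 (congrArg Subtype.val hzy))]
      have : δ (⟨(z : ℤ) + (1 - (y : ℤ)), h1⟩ : Xzd) = δ ⟨(z : ℤ) + (1 - (y : ℤ)) + -1 + 1, by simp; omega⟩ := by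
        congr 1; exact Subtype.ext (by dsimp only; omega)
      rw [← this, sub_self, map_zero]


end S

lemma opApprox {C : l2X →L[ℂ] l2X} (hC : IsCompactOperator ⇑C) {ε : ℝ} (hε : 0 < ε) :
    ∃ F₀ : Finset Xzd, ∀ F : Finset Xzd, F₀ ⊆ F → ‖C - (P F).comp C‖ ≤ ε := by
  classical
  obtain ⟨Kset, hKc, hKs⟩ :=
    hC.image_closedBall_subset_compact (𝕜₁ := ℂ) (f := (C : l2X →ₗ[ℂ] l2X)) 1
  obtain ⟨t, -, htfin, htcov⟩ := hKc.finite_cover_balls (e := ε / 4) (by linarith)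
  have hch : ∀ y : l2X, ∃ F₀ : Finset Xzd, ∀ F : Finset Xzd, F₀ ⊆ F → ‖y - P F y‖ < ε / 4 :=
    fun y => tail y (by linarith)
  choose g hg using hch
  refine ⟨htfin.toFinset.sup g, fun F hF => ?_⟩
  have hb : ∀ w : l2X, ‖w‖ ≤ 1 → ‖C w - P F (C w)‖ ≤ ε / 2 := by
    intro w hw
    have hmem : C w ∈ Kset := hKs ⟨w, by simpa using hw, rfl⟩
    obtain ⟨y, hyt, hy⟩ := Set.mem_iUnion₂.mp (htcov hmem)
    have hgy : g y ⊆ F :=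
      subset_trans (Finset.le_sup (f := g) (htfin.mem_toFinset.mpr hyt)) hF
    have h1 : ‖(C w - y) - P F (C w - y)‖ ≤ ε / 4 := by
      refine (norm_sub_P_le F (C w - y)).trans ?_
      rw [← dist_eq_norm]
      exact le_of_lt hy
    have h2 : ‖y - P F y‖ < ε / 4 := hg y F hgy
    have key : C w - P F (C w) = ((C w - y) - P F (C w - y)) + (y - P F y) := by
      rw [map_sub]; abel
    rw [key]
    calc ‖_ + _‖ ≤ ‖(C w - y) - P F (C w - y)‖ + ‖y - P F y‖ := norm_add_le _ _
      _ ≤ ε / 2 := by linarith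
  refine opNorm_le_of_shell (ε := 1) one_pos (by linarith) (c := (2 : ℂ)) (by norm_num)
    fun x hx1 hx2 => ?_
  have hx1' : (1:ℝ)/2 ≤ ‖x‖ := by
    rw [show ‖(2:ℂ)‖ = 2 by norm_num] at hx1
    linarith
  have hDx : (C - (P F).comp C) x = C x - P F (C x) := by
    rw [ContinuousLinearMap.sub_apply, ContinuousLinearMap.comp_apply]
  rw [hDx]
  calc ‖C x - P F (C x)‖ ≤ ε / 2 := hb x (by linarith)
    _ ≤ ε * ‖x‖ := by nlinarith

section S
variable (s : ℤ → (l2X →L[ℂ] l2X))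
variable (hs : ∀ (n : ℤ) (x : Xzd),
      (∀ h : (x : ℤ) + n ∈ Xzd, s n (δ x) = δ ⟨(x : ℤ) + n, h⟩) ∧
      ((x : ℤ) + n ∉ Xzd → s n (δ x) = 0))
include hs


lemma e_mem (x y : Xzd) : e x y ∈ StarAlgebra.adjoin ℂ (Set.range s) := by
  rw [e_eq s hs x y]
  have hg : ∀ n : ℤ, s n ∈ StarAlgebra.adjoin ℂ (Set.range s) := fun n =>
    StarAlgebra.subset_adjoin ℂ _ (Set.mem_range_self n)
  exact mul_mem (mul_mem (hg _) (sub_mem (one_mem _) (mul_mem (hg 1) (hg (-1))))) (hg _)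
end S

lemma PKP (K : l2X →L[ℂ] l2X) (F : Finset Xzd) :
    P F * K * P F = ∑ x ∈ F, ∑ y ∈ F, ⟪δ x, K (δ y)⟫_ℂ • e x y := by
  classical
  apply ext_delta; intro z
  rw [mul_apply_eq_comp, mul_apply_eq_comp, P_delta]
  have hRHS : (∑ x ∈ F, ∑ y ∈ F, ⟪δ x, K (δ y)⟫_ℂ • e x y) (δ z)
      = ∑ x ∈ F, ∑ y ∈ F, ⟪δ x, K (δ y)⟫_ℂ • (if z = y then δ x else 0) := by
    simp [ContinuousLinearMap.sum_apply, e_delta]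
  rw [hRHS]
  by_cases hz : z ∈ F
  · rw [if_pos hz, P_apply]
    refine Finset.sum_congr rfl fun x _ => ?_
    have hrw : ∀ y ∈ F, ⟪δ x, K (δ y)⟫_ℂ • (if z = y then δ x else 0)
        = if y = z then ⟪δ x, K (δ y)⟫_ℂ • δ x else 0 := by
      intro y _
      by_cases h : y = z
      · rw [if_pos h.symm, if_pos h, h]
      · rw [if_neg (fun hh => h hh.symm), if_neg h, smul_zero]
    rw [Finset.sum_congr rfl hrw, Finset.sum_ite_eq' F z
      (fun y => ⟪δ x, K (δ y)⟫_ℂ • δ x), if_pos hz, inner_delta]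
  · rw [if_neg hz, map_zero, map_zero]
    symm
    refine Finset.sum_eq_zero fun x _ => Finset.sum_eq_zero fun y hy => ?_
    rw [if_neg, smul_zero]
    rintro rfl; exact hz hy

lemma norm_one_sub_P (F : Finset Xzd) : ‖(1 : l2X →L[ℂ] l2X) - P F‖ ≤ 1 := by
  refine opNorm_le_bound _ zero_le_one fun v => ?_
  rw [ContinuousLinearMap.sub_apply, ContinuousLinearMap.one_apply, one_mul]
  exact norm_sub_P_le F v

lemma norm_P (F : Finset Xzd) : ‖P F‖ ≤ 1 := by
  refine opNorm_le_bound _ zero_le_one fun v => ?_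
  rw [one_mul]; exact norm_P_le F v


open ContinuousLinearMap in
/-- For `X = ℤ∖{0}` and the family of partial translation operators `sₙ` on `ℓ²(X)`
(determined by `sₙ δₓ = δ_{x+n}` if `x + n ∈ X` and `sₙ δₓ = 0` otherwise):
`s₁ s₁* = 1 − p₁` where `p₁` is the rank-one orthogonal projection onto the span of
`δ₁`, and the C*-subalgebra of `B(ℓ²(X))` generated by the family `{sₙ : n ∈ ℤ}`
contains every compact operator on `ℓ²(X)`. -/
theorem stmt3 (s : ℤ → (l2X →L[ℂ] l2X))
    (hs : ∀ (n : ℤ) (x : Xzd),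
      (∀ h : (x : ℤ) + n ∈ Xzd, s n (δ x) = δ ⟨(x : ℤ) + n, h⟩) ∧
      ((x : ℤ) + n ∉ Xzd → s n (δ x) = 0)) :
    s 1 * adjoint (s 1) = 1 - (innerSL ℂ (δ ⟨1, one_ne_zero⟩)).smulRight (δ ⟨1, one_ne_zero⟩) ∧
    ∀ K : l2X →L[ℂ] l2X, IsCompactOperator K →
      K ∈ (StarAlgebra.adjoin ℂ (Set.range s)).topologicalClosure := by
  
  constructor
  · exact part1 s hs
  · intro K hK
    set S := StarAlgebra.adjoin ℂ (Set.range s) with hS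
    rw [← SetLike.mem_coe, StarSubalgebra.topologicalClosure_coe]
    refine Metric.mem_closure_iff.mpr fun ε hε => ?_
    set η : ℝ := ε / 3 with hη
    have hη0 : 0 < η := by positivity
    have hKsK : IsCompactOperator ⇑(adjoint K ∘L K) := by
      rw [ContinuousLinearMap.coe_comp']
      exact hK.continuous_comp (adjoint K).continuous
    obtain ⟨F₁, hF₁⟩ := opApprox hK hη0
    obtain ⟨F₂, hF₂⟩ := opApprox hKsK (mul_pos hη0 hη0)
    set F := F₁ ∪ F₂ with hF
    have hA : ‖K - P F * K‖ ≤ η := by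
      rw [ContinuousLinearMap.mul_def]
      exact hF₁ F Finset.subset_union_left
    have hB : ‖K - K * P F‖ ≤ η := by
      set B := K - K * P F with hBdef
      have hBeq : B = K * (1 - P F) := by rw [mul_sub, mul_one]
      have hstarB : star B * B = ((1 - P F) * (adjoint K * K)) * (1 - P F) := by
        rw [hBeq, star_mul, star_sub, star_one, star_eq_adjoint, adjoint_P]
        rw [star_eq_adjoint]
        simp only [mul_assoc]
      have h1 : ‖star B * B‖ ≤ ‖(1 - P F) * (adjoint K * K)‖ * ‖(1:l2X →L[ℂ] l2X) - P F‖ := by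
        rw [hstarB]; exact norm_mul_le _ _
      have h2 : ‖(1 - P F) * (adjoint K * K)‖ ≤ η * η := by
        have : (1 - P F) * (adjoint K * K) = (adjoint K ∘L K) - (P F).comp (adjoint K ∘L K) := by
          simp only [sub_mul, one_mul, ContinuousLinearMap.mul_def]
        rw [this]
        exact hF₂ F Finset.subset_union_right
      have h3 : ‖B‖ * ‖B‖ = ‖star B * B‖ := (CStarRing.norm_star_mul_self).symm
      have h4 : ‖B‖ * ‖B‖ ≤ η * η := by
        calc ‖B‖ * ‖B‖ = ‖star B * B‖ := h3
          _ ≤ ‖(1 - P F) * (adjoint K * K)‖ * ‖(1:l2X →L[ℂ] l2X) - P F‖ := h1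
          _ ≤ (η * η) * 1 := by
              refine mul_le_mul h2 (norm_one_sub_P F) (norm_nonneg _) (by positivity)
          _ = η * η := mul_one _
      nlinarith [norm_nonneg B]
    set T := P F * K * P F with hT
    have hTmem : T ∈ S := by
      rw [hT, PKP]
      refine sum_mem fun x _ => sum_mem fun y _ => ?_
      exact SMulMemClass.smul_mem _ (e_mem s hs x y)
    refine ⟨T, hTmem, ?_⟩
    rw [dist_eq_norm]
    have hdecomp : K - T = (K - P F * K) + P F * (K - K * P F) := by
      have hms : P F * (K - K * P F) = P F * K - P F * K * P F := by
        rw [mul_sub, mul_assoc]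
      rw [hT, hms]; abel
    calc ‖K - T‖ = ‖(K - P F * K) + P F * (K - K * P F)‖ := by rw [hdecomp]
      _ ≤ ‖K - P F * K‖ + ‖P F * (K - K * P F)‖ := norm_add_le _ _
      _ ≤ η + ‖P F‖ * ‖K - K * P F‖ := by
          gcongr
          exact norm_mul_le _ _
      _ ≤ η + 1 * η := by
          gcongr
          exact norm_P F
      _ < ε := by rw [one_mul, hη]; linarith
end
end

section
/- Let X = ℤ∖{0} and let t be the bounded operator on ℓ²(X) determined by t(δⱼ) = δ_{j+1} for j ∈ X with j ≠ −1, and t(δ_{−1}) = δ₁. Then: (1) t is a unitary operator; (2) for every n ∈ ℤ, the operator tⁿ − sₙ on ℓ²(X) is compact; and (3) if U : ℓ²(X) → ℓ²(ℤ) is the unitary induced by the bijection φ : X → ℤ with φ(j) = j for j > 0 and φ(j) = j + 1 for j < 0 (so U(δⱼ) = δ_{φ(j)}), then U t U* is the bilateral shift on ℓ²(ℤ). -/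
/- ℓ²(X) for X = ℤ∖{0} and ℓ²(ℤ), with their standard orthonormal bases. -/
noncomputable section

abbrev l2Z : Type := lp (fun _ : ℤ => ℂ) 2

/-- The standard basis vector δₙ of ℓ²(ℤ). -/
def δZ (n : ℤ) : l2Z := lp.single 2 n 1

/-- The bijective coarse equivalence `φ : X → ℤ`, `φ(j) = j` for `j > 0` and
`φ(j) = j + 1` for `j < 0`. -/
def φ (j : Xzd) : ℤ := if 0 < (j : ℤ) then (j : ℤ) else (j : ℤ) + 1

/-! ### Auxiliary material -/

section Helpers

local notation "⟪" x ", " y "⟫" => @inner ℂ _ _ x y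

variable {ι : Type*} [DecidableEq ι]

lemma inner_single_single' (i j : ι) :
    ⟪lp.single (E := fun _ : ι => ℂ) 2 i (1:ℂ), lp.single 2 j (1:ℂ)⟫
      = if j = i then 1 else 0 := by
  rw [lp.inner_single_left]
  simp [lp.single_apply, Pi.single_apply, eq_comm]

lemma vec_ext' {v w : lp (fun _ : ι => ℂ) 2}
    (h : ∀ i, ⟪lp.single (E := fun _ : ι => ℂ) 2 i (1:ℂ), v⟫
      = ⟪lp.single (E := fun _ : ι => ℂ) 2 i (1:ℂ), w⟫) : v = w := by
  ext i
  have := h i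
  rw [lp.inner_single_left, lp.inner_single_left] at this
  simpa [RCLike.inner_apply] using this

lemma dense_span_single' :
    Dense ((Submodule.span ℂ (Set.range
      (fun i : ι => lp.single (E := fun _ : ι => ℂ) 2 i (1:ℂ)))) :
        Set (lp (fun _ : ι => ℂ) 2)) := by
  rw [Submodule.dense_iff_topologicalClosure_eq_top,
    Submodule.topologicalClosure_eq_top_iff, Submodule.eq_bot_iff]
  intro v hv
  refine vec_ext' fun i => ?_
  rw [(Submodule.mem_orthogonal _ _).mp hv _ (Submodule.subset_span ⟨i, rfl⟩)]
  simp

lemma clm_ext' {F : Type*} [NormedAddCommGroup F] [NormedSpace ℂ F]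
    {A B : lp (fun _ : ι => ℂ) 2 →L[ℂ] F}
    (h : ∀ i, A (lp.single 2 i (1:ℂ)) = B (lp.single 2 i (1:ℂ))) : A = B := by
  refine ContinuousLinearMap.ext_on dense_span_single' ?_
  rintro x ⟨i, rfl⟩
  exact h i

lemma isCompactOperator_smulRight' {E F : Type*} [NormedAddCommGroup E] [NormedSpace ℂ E]
    [NormedAddCommGroup F] [NormedSpace ℂ F] (c : E →L[ℂ] ℂ) (v : F) :
    IsCompactOperator (c.smulRight v : E → F) := by
  rw [isCompactOperator_iff_exists_mem_nhds_image_subset_compact]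
  refine ⟨c ⁻¹' Metric.closedBall 0 1, ?_,
    (fun a : ℂ => a • v) '' Metric.closedBall 0 1,
    (isCompact_closedBall 0 1).image (by continuity), ?_⟩
  · apply c.continuous.continuousAt.preimage_mem_nhds
    simpa using Metric.closedBall_mem_nhds (0:ℂ) one_pos
  · rintro y ⟨x, hx, rfl⟩
    exact ⟨c x, hx, by simp⟩

lemma isCompactOperator_finset_sum' {α : Type*} {E F : Type*} [NormedAddCommGroup E]
    [NormedSpace ℂ E] [NormedAddCommGroup F] [NormedSpace ℂ F] {s : Finset α}
    {f : α → E →L[ℂ] F} (h : ∀ i ∈ s, IsCompactOperator (f i : E → F)) :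
    IsCompactOperator ((∑ i ∈ s, f i : E →L[ℂ] F) : E → F) := by
  classical
  induction s using Finset.induction with
  | empty => simpa using isCompactOperator_zero
  | @insert a s hne ih =>
      rw [Finset.sum_insert hne]
      exact (h _ (Finset.mem_insert_self _ _)).add
        (ih fun i hi => h i (Finset.mem_insert_of_mem hi))

lemma compact_of_finite_supp' {F : Finset ι}
    {A : lp (fun _ : ι => ℂ) 2 →L[ℂ] lp (fun _ : ι => ℂ) 2}
    (h : ∀ i ∉ F, A (lp.single 2 i 1) = 0) : IsCompactOperator (A : _ → _) := by
  have hA : A = ∑ i ∈ F,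
      (innerSL ℂ (lp.single (E := fun _ : ι => ℂ) 2 i (1:ℂ))).smulRight
        (A (lp.single 2 i 1)) := by
    refine clm_ext' fun j => ?_
    rw [ContinuousLinearMap.sum_apply]
    have : ∀ i ∈ F, ((innerSL ℂ (lp.single (E := fun _ : ι => ℂ) 2 i (1:ℂ))).smulRight
        (A (lp.single 2 i 1))) (lp.single 2 j 1)
        = if j = i then A (lp.single 2 j 1) else 0 := by
      intro i _
      rw [ContinuousLinearMap.smulRight_apply, innerSL_apply_apply, inner_single_single']
      split <;> simp_all
    rw [Finset.sum_congr rfl this, Finset.sum_ite_eq]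
    split
    · rfl
    · exact h j ‹_›
  rw [hA]
  exact isCompactOperator_finset_sum' fun i _ => isCompactOperator_smulRight' _ _

end Helpers

/-- Successor bijection on `X = ℤ∖{0}`. -/
def σf (j : Xzd) : Xzd :=
  if h : (j : ℤ) = -1 then ⟨1, one_ne_zero⟩
  else ⟨(j : ℤ) + 1, by have := j.2; simp only [Xzd, Set.mem_setOf_eq] at *; omega⟩

/-- Predecessor bijection on `X = ℤ∖{0}`. -/
def τf (j : Xzd) : Xzd :=
  if h : (j : ℤ) = 1 then ⟨-1, by norm_num⟩
  else ⟨(j : ℤ) - 1, by have := j.2; simp only [Xzd, Set.mem_setOf_eq] at *; omega⟩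

/-- Inverse of `φ`. -/
def ψ (n : ℤ) : Xzd :=
  if h : 0 < n then ⟨n, by simp only [Xzd, Set.mem_setOf_eq]; omega⟩
  else ⟨n - 1, by simp only [Xzd, Set.mem_setOf_eq]; omega⟩

lemma σf_coe (j : Xzd) :
    ((σf j : Xzd) : ℤ) = if (j : ℤ) = -1 then 1 else (j : ℤ) + 1 := by
  rw [σf]; split <;> simp_all

lemma τf_coe (j : Xzd) :
    ((τf j : Xzd) : ℤ) = if (j : ℤ) = 1 then -1 else (j : ℤ) - 1 := by
  rw [τf]; split <;> simp_all

lemma ψ_coe (n : ℤ) : ((ψ n : Xzd) : ℤ) = if 0 < n then n else n - 1 := by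
  rw [ψ]; split <;> simp_all

lemma coe_ne_zero (j : Xzd) : (j : ℤ) ≠ 0 := j.2

lemma τf_σf (j : Xzd) : τf (σf j) = j := by
  have := coe_ne_zero j
  apply Subtype.ext
  rw [τf_coe, σf_coe]
  split_ifs <;> omega

lemma σf_τf (j : Xzd) : σf (τf j) = j := by
  have := coe_ne_zero j
  apply Subtype.ext
  rw [σf_coe, τf_coe]
  split_ifs <;> omega

lemma φ_σf (j : Xzd) : φ (σf j) = φ j + 1 := by
  have := coe_ne_zero j
  rw [φ, φ, σf_coe]
  split_ifs <;> omega

lemma φ_ψ (n : ℤ) : φ (ψ n) = n := by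
  rw [φ, ψ_coe]
  split_ifs <;> omega

lemma σf_iter (n : ℕ) (x : Xzd) :
    ((σf^[n] x : Xzd) : ℤ)
      = if (x : ℤ) < 0 ∧ 0 ≤ (x : ℤ) + n then (x : ℤ) + n + 1 else (x : ℤ) + n := by
  induction n generalizing x with
  | zero =>
      have := coe_ne_zero x
      simp only [Function.iterate_zero, id_eq, Nat.cast_zero]
      split_ifs <;> omega
  | succ n ih =>
      have := coe_ne_zero x
      rw [Function.iterate_succ_apply, ih (σf x), σf_coe]
      push_cast
      split_ifs <;> omega

lemma τf_iter (n : ℕ) (x : Xzd) :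
    ((τf^[n] x : Xzd) : ℤ)
      = if 0 < (x : ℤ) ∧ (x : ℤ) - n ≤ 0 then (x : ℤ) - n - 1 else (x : ℤ) - n := by
  induction n generalizing x with
  | zero =>
      have := coe_ne_zero x
      simp only [Function.iterate_zero, id_eq, Nat.cast_zero]
      split_ifs <;> omega
  | succ n ih =>
      have := coe_ne_zero x
      rw [Function.iterate_succ_apply, ih (τf x), τf_coe]
      push_cast
      split_ifs <;> omega

open ContinuousLinearMap in
/-- Let `X = ℤ∖{0}` and let `t` be the operator on `ℓ²(X)` with `t δⱼ = δ_{j+1}` for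
`j ≠ −1` and `t δ₋₁ = δ₁`.  Then (1) `t` is unitary; (2) `tⁿ − sₙ` is compact for every
`n ∈ ℤ` (for negative exponents `tⁿ = (t*)^{−n}`); and (3) conjugating `t` by the
unitary `U : ℓ²(X) → ℓ²(ℤ)` induced by `φ` yields the bilateral shift on `ℓ²(ℤ)`. -/
theorem stmt5 (s : ℤ → (l2X →L[ℂ] l2X))
    (hs : ∀ (n : ℤ) (x : Xzd),
      (∀ h : (x : ℤ) + n ∈ Xzd, s n (δ x) = δ ⟨(x : ℤ) + n, h⟩) ∧
      ((x : ℤ) + n ∉ Xzd → s n (δ x) = 0))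
    (t : l2X →L[ℂ] l2X)
    (ht : ∀ (j : Xzd) (h : (j : ℤ) + 1 ∈ Xzd), (j : ℤ) ≠ -1 → t (δ j) = δ ⟨(j : ℤ) + 1, h⟩)
    (ht' : t (δ ⟨-1, by norm_num⟩) = δ ⟨1, one_ne_zero⟩)
    (U : l2X →L[ℂ] l2Z) (hU : ∀ x : Xzd, U (δ x) = δZ (φ x))
    (hUl : adjoint U ∘L U = (1 : l2X →L[ℂ] l2X)) (hUr : U ∘L adjoint U = (1 : l2Z →L[ℂ] l2Z))
    (B : l2Z →L[ℂ] l2Z) (hB : ∀ n : ℤ, B (δZ n) = δZ (n + 1)) :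
    t ∈ unitary (l2X →L[ℂ] l2X) ∧
    (∀ n : ℕ, IsCompactOperator ((t ^ n - s n : l2X →L[ℂ] l2X) : l2X → l2X) ∧
      IsCompactOperator (((star t) ^ n - s (-(n : ℤ)) : l2X →L[ℂ] l2X) : l2X → l2X)) ∧
    U ∘L t ∘L adjoint U = B := by
  classical
  -- t on the basis
  have htσ : ∀ j : Xzd, t (δ j) = δ (σf j) := by
    intro j
    by_cases hj : (j : ℤ) = -1
    · have hje : j = ⟨-1, by norm_num⟩ := Subtype.ext hj
      rw [hje, ht']
      congr 1
    · have hmem : (j : ℤ) + 1 ∈ Xzd := by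
        have := coe_ne_zero j
        simp only [Xzd, Set.mem_setOf_eq]; omega
      rw [ht j hmem hj]
      congr 1
      apply Subtype.ext
      rw [σf_coe, if_neg hj]
  -- star t on the basis
  have hstar : ∀ x : Xzd, (star t) (δ x) = δ (τf x) := by
    intro x
    rw [ContinuousLinearMap.star_eq_adjoint]
    refine vec_ext' fun y => ?_
    have h1 : (inner ℂ (lp.single (E := fun _ : Xzd => ℂ) 2 y (1:ℂ)) (adjoint t (δ x)) : ℂ)
        = inner ℂ (t (δ y)) (δ x) := ContinuousLinearMap.adjoint_inner_right t _ _
    rw [h1, htσ y]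
    show (inner ℂ (lp.single (E := fun _ : Xzd => ℂ) 2 (σf y) (1:ℂ)) (lp.single 2 x 1) : ℂ)
      = inner ℂ (lp.single (E := fun _ : Xzd => ℂ) 2 y (1:ℂ)) (lp.single 2 (τf x) 1)
    rw [inner_single_single', inner_single_single']
    have hiff : (x = σf y) ↔ (τf x = y) :=
      ⟨fun h => by rw [h, τf_σf], fun h => by rw [← h, σf_τf]⟩
    rw [if_congr hiff rfl rfl]
  -- powers on the basis
  have hpow : ∀ (n : ℕ) (x : Xzd), (t ^ n) (δ x) = δ (σf^[n] x) := by
    intro n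
    induction n with
    | zero => intro x; simp
    | succ n ih =>
        intro x
        rw [pow_succ, ContinuousLinearMap.mul_apply, htσ x, ih,
          ← Function.iterate_succ_apply]
  have hpow' : ∀ (n : ℕ) (x : Xzd), ((star t) ^ n) (δ x) = δ (τf^[n] x) := by
    intro n
    induction n with
    | zero => intro x; simp
    | succ n ih =>
        intro x
        rw [pow_succ, ContinuousLinearMap.mul_apply, hstar x, ih,
          ← Function.iterate_succ_apply]
  refine ⟨?_, ?_, ?_⟩
  · -- t is unitary
    rw [Unitary.mem_iff]
    constructor
    · refine clm_ext' fun x => ?_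
      show (star t * t) (δ x) = (1 : l2X →L[ℂ] l2X) (δ x)
      rw [ContinuousLinearMap.mul_apply, htσ x, hstar, τf_σf, ContinuousLinearMap.one_apply]
    · refine clm_ext' fun x => ?_
      show (t * star t) (δ x) = (1 : l2X →L[ℂ] l2X) (δ x)
      rw [ContinuousLinearMap.mul_apply, hstar x, htσ, σf_τf, ContinuousLinearMap.one_apply]
  · -- compactness
    intro n
    constructor
    · refine compact_of_finite_supp'
        (F := (Finset.Icc (-(n:ℤ)) (-1)).subtype (· ∈ Xzd)) fun x hx => ?_
      rw [Finset.mem_subtype, Finset.mem_Icc] at hx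
      have hxne := coe_ne_zero x
      show (t ^ n - s n) (δ x) = 0
      rw [ContinuousLinearMap.sub_apply, sub_eq_zero, hpow n x]
      have hmem : (x : ℤ) + n ∈ Xzd := by
        simp only [Xzd, Set.mem_setOf_eq]; omega
      rw [(hs n x).1 hmem]
      congr 1
      apply Subtype.ext
      rw [σf_iter]
      rw [if_neg (by omega)]
    · refine compact_of_finite_supp'
        (F := (Finset.Icc (1:ℤ) (n:ℤ)).subtype (· ∈ Xzd)) fun x hx => ?_
      rw [Finset.mem_subtype, Finset.mem_Icc] at hx
      have hxne := coe_ne_zero x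
      show ((star t) ^ n - s (-(n:ℤ))) (δ x) = 0
      rw [ContinuousLinearMap.sub_apply, sub_eq_zero, hpow' n x]
      have hmem : (x : ℤ) + -(n:ℤ) ∈ Xzd := by
        simp only [Xzd, Set.mem_setOf_eq]; omega
      rw [(hs (-(n:ℤ)) x).1 hmem]
      congr 1
      apply Subtype.ext
      rw [τf_iter]
      rw [if_neg (by omega)]
      show (x:ℤ) - (n:ℤ) = (x:ℤ) + -(n:ℤ)
      omega
  · -- conjugation gives the bilateral shift
    refine clm_ext' fun n => ?_
    show (U ∘L t ∘L adjoint U) (δZ n) = B (δZ n)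
    have h1 : adjoint U (δZ n) = δ (ψ n) := by
      conv_lhs => rw [← φ_ψ n, ← hU (ψ n)]
      have h2 := congrArg (fun A : l2X →L[ℂ] l2X => A (δ (ψ n))) hUl
      simpa using h2
    rw [ContinuousLinearMap.comp_apply, ContinuousLinearMap.comp_apply, h1, htσ, hU,
      φ_σf, φ_ψ, hB]
end
end
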